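/- For any integer m ≥ 2, the product ∏_{j=1}^{m-1} sin((2j-1)π/(4(m-1))) equals 2^(3/2 - m). -/

import Mathlib

open Finset

lemma aux_exp (z : ℂ) : 1 - Complex.exp (2 * z * Complex.I)
    = 2 * Complex.sin z * (-Complex.I * Complex.exp (z * Complex.I)) := by
  have h1 : Complex.exp (-z * Complex.I) * Complex.exp (z * Complex.I) = 1 := by
    rw [← Complex.exp_add]; ring_nf; exact Complex.exp_zero
  have h2 : Complex.exp (z * Complex.I) * Complex.exp (z * Complex.I)
      = Complex.exp (2 * z * Complex.I) := by
    rw [← Complex.exp_add]; ring_nf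
  have h3 : Complex.I * Complex.I = -1 := Complex.I_mul_I
  rw [Complex.sin]
  linear_combination (-1 : ℂ) * h1 + h2 +
    ((Complex.exp (-z * Complex.I) - Complex.exp (z * Complex.I)) * Complex.exp (z * Complex.I)) * h3

lemma sum_odd (n : ℕ) : ∑ k ∈ range n, (2 * k + 1) = n ^ 2 := by
  induction n with
  | zero => simp
  | succ n ih => rw [Finset.sum_range_succ, ih]; ring

lemma key1 (n : ℕ) (hn : 1 ≤ n) :
    ∏ k ∈ range n, (2 * Real.sin ((2 * k + 1) * Real.pi / (2 * n))) = 2 := by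
  have hn0 : (n : ℂ) ≠ 0 := Nat.cast_ne_zero.mpr (by omega)
  have hμ : IsPrimitiveRoot (Complex.exp (2 * Real.pi * Complex.I / n)) n :=
    Complex.isPrimitiveRoot_exp n (by omega)
  have e : Complex.exp (Real.pi * Complex.I / n) ^ n = -1 := by
    rw [← Complex.exp_nat_mul]
    have : (n : ℂ) * (Real.pi * Complex.I / n) = Real.pi * Complex.I := by
      field_simp
    rw [this, Complex.exp_pi_mul_I]
  have h := X_pow_sub_C_eq_prod hμ (by omega : 0 < n) e
  apply_fun Polynomial.eval 1 at h
  simp only [Polynomial.eval_sub, Polynomial.eval_pow, Polynomial.eval_X, Polynomial.eval_C,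
    Polynomial.eval_prod] at h
  rw [one_pow, sub_neg_eq_add] at h
  have hterm : ∀ k ∈ range n,
      (1 : ℂ) - Complex.exp (2 * Real.pi * Complex.I / n) ^ k * Complex.exp (Real.pi * Complex.I / n)
      = (2 * Real.sin ((2 * k + 1) * Real.pi / (2 * n)) : ℝ) *
        (-Complex.I * Complex.exp (((2 * k + 1) * Real.pi / (2 * n) : ℝ) * Complex.I)) := by
    intro k _
    have harg : Complex.exp (2 * Real.pi * Complex.I / n) ^ k * Complex.exp (Real.pi * Complex.I / n)
        = Complex.exp (2 * (((2 * k + 1) * Real.pi / (2 * n) : ℝ) : ℂ) * Complex.I) := by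
      rw [← Complex.exp_nat_mul, ← Complex.exp_add]
      congr 1
      push_cast
      field_simp
    rw [harg, aux_exp]
    push_cast [Complex.ofReal_sin]
    ring_nf
  rw [Finset.prod_congr rfl hterm, Finset.prod_mul_distrib] at h
  have hsecond : ∏ k ∈ range n,
      (-Complex.I * Complex.exp (((2 * k + 1) * Real.pi / (2 * n) : ℝ) * Complex.I)) = 1 := by
    rw [Finset.prod_mul_distrib, Finset.prod_const, ← Complex.exp_sum, Finset.card_range]
    have hsum : ∑ k ∈ range n, (((2 * k + 1) * Real.pi / (2 * n) : ℝ) : ℂ) * Complex.I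
        = n * (Real.pi * Complex.I / 2) := by
      have : ∀ k ∈ range n, (((2 * k + 1) * Real.pi / (2 * n) : ℝ) : ℂ) * Complex.I
          = ((2 * k + 1 : ℕ) : ℂ) * (Real.pi * Complex.I / (2 * n)) := by
        intro k _; push_cast; ring
      rw [Finset.sum_congr rfl this, ← Finset.sum_mul, ← Nat.cast_sum, sum_odd]
      push_cast
      field_simp
    rw [hsum]
    have hexp : Complex.exp ((n : ℂ) * (Real.pi * Complex.I / 2)) = Complex.I ^ n := by
      rw [Complex.exp_nat_mul]
      congr 1
      have : (Real.pi : ℂ) * Complex.I / 2 = (Real.pi / 2 : ℝ) * Complex.I := by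
        push_cast; ring
      rw [this, Complex.exp_mul_I]
      simp [Complex.cos_pi_div_two, Complex.sin_pi_div_two]
    rw [hexp, ← mul_pow]
    norm_num [Complex.I_mul_I]
  rw [hsecond, mul_one] at h
  push_cast at h
  have : ((∏ k ∈ range n, (2 * Real.sin ((2 * k + 1) * Real.pi / (2 * n))) : ℝ) : ℂ) = 2 := by
    push_cast
    rw [← h]
    norm_num
  exact_mod_cast this

theorem stmt0 (m : ℕ) (hm : 2 ≤ m) :
    ∏ j ∈ Finset.Icc 1 (m - 1),
      Real.sin ((2 * (j : ℝ) - 1) * Real.pi / (4 * ((m : ℝ) - 1)))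
      = (2 : ℝ) ^ ((3 : ℝ) / 2 - (m : ℝ)) := by
  obtain ⟨n, rfl⟩ : ∃ n, m = n + 1 := ⟨m - 1, by omega⟩
  have hn : 1 ≤ n := by omega
  have hn0 : (n : ℝ) ≠ 0 := Nat.cast_ne_zero.mpr (by omega)
  have hnpos : (0 : ℝ) < n := by
    have : (1 : ℝ) ≤ n := by exact_mod_cast hn
    linarith
  have hcast : ((n + 1 : ℕ) : ℝ) - 1 = (n : ℝ) := by push_cast; ring
  set P := ∏ k ∈ range n, Real.sin ((2 * k + 1) * Real.pi / (4 * n)) with hPdef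
  have hprod : ∏ j ∈ Finset.Icc 1 ((n + 1) - 1),
      Real.sin ((2 * (j : ℝ) - 1) * Real.pi / (4 * (((n + 1 : ℕ) : ℝ) - 1))) = P := by
    rw [Nat.add_sub_cancel, ← Finset.Ico_add_one_right_eq_Icc, Finset.prod_Ico_eq_prod_range]
    simp only [Nat.add_sub_cancel, hcast]
    refine Finset.prod_congr rfl fun k _ => ?_
    push_cast
    ring_nf
  rw [hprod]
  -- positivity of P
  have hPpos : 0 < P := by
    refine Finset.prod_pos fun k hk => ?_
    have hk' : k < n := Finset.mem_range.mp hk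
    refine Real.sin_pos_of_pos_of_lt_pi ?_ ?_
    · have : (0 : ℝ) < 2 * k + 1 := by positivity
      positivity
    · rw [div_lt_iff₀ (by positivity)]
      have h1 : (2 * (k : ℝ) + 1) ≤ 2 * n - 1 := by
        have : (k : ℝ) ≤ n - 1 := by
          have : ((k : ℝ)) + 1 ≤ n := by exact_mod_cast hk'
          linarith
        linarith
      nlinarith [Real.pi_pos]
  -- reflection : product of cosines equals P
  have hrefl : ∏ k ∈ range n, Real.cos ((2 * k + 1) * Real.pi / (4 * n)) = P := by
    rw [hPdef, ← Finset.prod_range_reflect]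
    refine Finset.prod_congr rfl fun k hk => ?_
    have hk' : k < n := Finset.mem_range.mp hk
    have hcast2 : ((n - 1 - k : ℕ) : ℝ) = (n : ℝ) - 1 - k := by
      have : (1 : ℕ) + k ≤ n := by omega
      push_cast [Nat.cast_sub (by omega : 1 ≤ n), Nat.cast_sub (by omega : k ≤ n - 1)]
      ring
    rw [hcast2]
    have harg : (2 * ((n : ℝ) - 1 - k) + 1) * Real.pi / (4 * n)
        = Real.pi / 2 - (2 * k + 1) * Real.pi / (4 * n) := by
      field_simp
      ring
    rw [harg, Real.cos_pi_div_two_sub]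
  -- squaring
  have hsq : P * P = (2 : ℝ) / 2 ^ n / 2 ^ n := by
    have h2 : P * P = ∏ k ∈ range n,
        (Real.sin ((2 * k + 1) * Real.pi / (4 * n)) * Real.cos ((2 * k + 1) * Real.pi / (4 * n))) := by
      rw [Finset.prod_mul_distrib]
      rw [hrefl, hPdef]
    have h3 : ∀ k ∈ range n,
        Real.sin ((2 * k + 1) * Real.pi / (4 * n)) * Real.cos ((2 * k + 1) * Real.pi / (4 * n))
        = 2 * Real.sin ((2 * k + 1) * Real.pi / (2 * n)) / 4 := by
      intro k _
      have harg : (2 * (k : ℝ) + 1) * Real.pi / (2 * n)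
          = 2 * ((2 * k + 1) * Real.pi / (4 * n)) := by
        field_simp; ring
      rw [harg, Real.sin_two_mul]
      ring
    rw [h2, Finset.prod_congr rfl h3, Finset.prod_div_distrib, Finset.prod_const,
      Finset.card_range, key1 n hn]
    rw [show (4 : ℝ) ^ n = 2 ^ n * 2 ^ n by rw [← mul_pow]; norm_num]
    field_simp
  -- conclude
  have hR : (2 : ℝ) ^ ((3 : ℝ) / 2 - ((n + 1 : ℕ) : ℝ)) * (2 : ℝ) ^ ((3 : ℝ) / 2 - ((n + 1 : ℕ) : ℝ))
      = (2 : ℝ) / 2 ^ n / 2 ^ n := by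
    rw [← Real.rpow_add two_pos]
    have : ((3 : ℝ) / 2 - ((n + 1 : ℕ) : ℝ)) + ((3 : ℝ) / 2 - ((n + 1 : ℕ) : ℝ))
        = 1 - 2 * n := by push_cast; ring
    rw [this, Real.rpow_sub two_pos, Real.rpow_one]
    rw [show (2 : ℝ) * n = ((2 * n : ℕ) : ℝ) by push_cast; ring, Real.rpow_natCast,
      pow_mul]
    rw [show ((2:ℝ)^2) = 4 by norm_num, show (4 : ℝ) ^ n = 2 ^ n * 2 ^ n by rw [← mul_pow]; norm_num]
    ring
  have hRpos : (0 : ℝ) < (2 : ℝ) ^ ((3 : ℝ) / 2 - ((n + 1 : ℕ) : ℝ)) := Real.rpow_pos_of_pos two_pos _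
  set R := (2 : ℝ) ^ ((3 : ℝ) / 2 - ((n + 1 : ℕ) : ℝ))
  have hzero : (P - R) * (P + R) = 0 := by
    have : P * P = R * R := by rw [hsq, hR]
    nlinarith [this]
  rcases mul_eq_zero.mp hzero with h | h
  · linarith
  · linarith
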